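/- Let M be a commutative integral (cancellative) monoid with group of units U, and suppose the group completion of the quotient monoid M/U (equivalently, M^{gp}/U) is a free abelian group. Then the projection M → M/U admits a monoid section s : M/U → M, and the induced map (M/U) × U → M, (p, u) ↦ s(p)·u, is an isomorphism of monoids. -/

import Mathlib

section Gro
variable (M : Type) [CancelCommMonoid M]

/-- The Grothendieck-group congruence on `M × M`. -/
def stmt9Con : Con (M × M) where
  r x y := x.1 * y.2 = y.1 * x.2
  iseqv := by
    refine ⟨fun x => rfl, fun h => h.symm, ?_⟩
    rintro ⟨a1, a2⟩ ⟨b1, b2⟩ ⟨c1, c2⟩ h1 h2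
    dsimp only at h1 h2 ⊢
    apply mul_left_cancel (a := b2)
    calc b2 * (a1 * c2) = (a1 * b2) * c2 := by ac_rfl
    _ = (b1 * a2) * c2 := by rw [h1]
    _ = a2 * (b1 * c2) := by ac_rfl
    _ = a2 * (c1 * b2) := by rw [h2]
    _ = b2 * (c1 * a2) := by ac_rfl
  mul' := by
    rintro ⟨a1, a2⟩ ⟨b1, b2⟩ ⟨c1, c2⟩ ⟨d1, d2⟩ h1 h2
    show (a1 * c1) * (b2 * d2) = (b1 * d1) * (a2 * c2)
    calc (a1 * c1) * (b2 * d2) = (a1 * b2) * (c1 * d2) := by ac_rfl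
    _ = (b1 * a2) * (d1 * c2) := by rw [h1, h2]
    _ = (b1 * d1) * (a2 * c2) := by ac_rfl

instance : CommGroup (stmt9Con M).Quotient :=
  { (inferInstance : CommMonoid (stmt9Con M).Quotient) with
    inv := fun x => Con.liftOn x (fun p => (((p.2, p.1) : M × M) : (stmt9Con M).Quotient))
      (fun a b h => ((stmt9Con M).eq).mpr (by
        show a.2 * b.1 = b.2 * a.1
        have : a.1 * b.2 = b.1 * a.2 := h
        calc a.2 * b.1 = b.1 * a.2 := mul_comm _ _
        _ = a.1 * b.2 := this.symm
        _ = b.2 * a.1 := mul_comm _ _))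
    inv_mul_cancel := fun x => Con.induction_on x fun p => by
      show (((p.2, p.1) : M × M) : (stmt9Con M).Quotient) * ((p : M × M) : (stmt9Con M).Quotient) = 1
      rw [← Con.coe_mul]
      refine ((stmt9Con M).eq).mpr ?_
      show (p.2 * p.1) * 1 = 1 * (p.1 * p.2)
      ac_rfl }

/-- The canonical embedding `M →* G(M)`. -/
def stmt9Emb : M →* (stmt9Con M).Quotient where
  toFun m := (((m, 1) : M × M) : (stmt9Con M).Quotient)
  map_one' := rfl
  map_mul' a b := by
    rw [← Con.coe_mul]
    exact ((stmt9Con M).eq).mpr (by show (a * b) * (1 * 1) = (a * b) * 1; simp)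

lemma stmt9Emb_injective : Function.Injective (stmt9Emb M) := by
  intro a b h
  have := ((stmt9Con M).eq).mp h
  have h2 : a * 1 = b * 1 := this
  simpa using h2

end Gro

theorem stmt9_free {ι : Type} (H : Submodule ℤ (ι →₀ ℤ)) : Module.Free ℤ ↥H := by
  classical
  obtain ⟨lo, wfi⟩ := exists_wellOrder ι
  set Hle : ι → Submodule ℤ (ι →₀ ℤ) :=
    fun i => H ⊓ Finsupp.supported ℤ ℤ (Set.Iic i) with hHle
  set J : ι → Ideal ℤ := fun i => (Hle i).map (Finsupp.lapply i) with hJdef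
  set n : ι → ℤ := fun i => Submodule.IsPrincipal.generator (J i) with hndef
  have hex : ∀ i : ι, ∃ x : ι →₀ ℤ, x ∈ Hle i ∧ x i = n i := by
    intro i
    obtain ⟨x, hx, hxi⟩ := Submodule.mem_map.mp (Submodule.IsPrincipal.generator_mem (J i))
    exact ⟨x, hx, hxi⟩
  choose e he1 he2 using hex
  have heH : ∀ i, e i ∈ H := fun i => (Submodule.mem_inf.mp (he1 i)).1
  have hsupp : ∀ i j, i < j → e i j = 0 := by
    intro i j hij
    by_contra h
    have : j ∈ (e i).support := Finsupp.mem_support_iff.mpr h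
    have := (Finsupp.mem_supported ℤ _).mp (Submodule.mem_inf.mp (he1 i)).2 this
    exact absurd this (not_le.mpr hij)
  -- the index set
  set S := {i : ι // n i ≠ 0} with hSdef
  -- linear independence
  have hind : LinearIndependent ℤ (fun i : S => e i.1) := by
    rw [linearIndependent_iff']
    intro s g hsum i hi
    by_contra hgi
    set t := s.filter (fun i => g i ≠ 0) with htdef
    have hne : t.Nonempty := ⟨i, Finset.mem_filter.mpr ⟨hi, hgi⟩⟩
    set j := t.max' hne with hjdef
    have hj : j ∈ t := t.max'_mem hne
    have hjs : j ∈ s := (Finset.mem_filter.mp hj).1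
    have hgj : g j ≠ 0 := (Finset.mem_filter.mp hj).2
    have happ := congrArg (fun x : ι →₀ ℤ => x j.1) hsum
    simp only [Finsupp.finset_sum_apply, Finsupp.smul_apply, smul_eq_mul,
      Finsupp.coe_zero, Pi.zero_apply] at happ
    rw [Finset.sum_eq_single j (fun b hb hbj => ?_) (fun h => absurd hjs h)] at happ
    · rw [he2 j.1] at happ
      exact hgj (by
        rcases mul_eq_zero.mp happ with h | h
        · exact h
        · exact absurd h j.2)
    · rcases eq_or_ne (g b) 0 with h | h
      · rw [h, zero_mul]
      · have hbt : b ∈ t := Finset.mem_filter.mpr ⟨hb, h⟩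
        have hble : b ≤ j := t.le_max' b hbt
        have : b.1 < j.1 := lt_of_le_of_ne (Subtype.coe_le_coe.mpr hble)
          (fun hc => hbj (Subtype.ext hc))
        rw [hsupp b.1 j.1 this, mul_zero]
  -- spanning
  have hspan : ∀ x : ι →₀ ℤ, x ∈ H →
      x ∈ Submodule.span ℤ (Set.range fun i : S => e i.1) := by
    have key : ∀ (m : WithBot ι) (x : ι →₀ ℤ), x ∈ H → x.support.max = m →
        x ∈ Submodule.span ℤ (Set.range fun i : S => e i.1) := by
      intro m
      induction m using WellFoundedLT.induction with
      | _ m ih =>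
        intro x hx hm
        rcases eq_or_ne x 0 with rfl | hx0
        · exact Submodule.zero_mem _
        have hne : x.support.Nonempty := Finsupp.support_nonempty_iff.mpr hx0
        set i := x.support.max' hne with hidef
        have hmi : m = (i : WithBot ι) := by rw [← hm, Finset.coe_max']
        have hi : i ∈ x.support := x.support.max'_mem hne
        have hxi : x i ≠ 0 := Finsupp.mem_support_iff.mp hi
        have hxle : x ∈ Hle i := Submodule.mem_inf.mpr ⟨hx,
          (Finsupp.mem_supported ℤ _).mpr (fun j hj => x.support.le_max' j hj)⟩
        have hxiJ : x i ∈ J i := ⟨x, hxle, rfl⟩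
        obtain ⟨c, hc⟩ := (Submodule.IsPrincipal.mem_iff_eq_smul_generator (J i)).mp hxiJ
        have hni : n i ≠ 0 := by
          intro h
          apply hxi
          rw [hc, show Submodule.IsPrincipal.generator (J i) = n i from rfl, h, smul_zero]
        set iS : S := ⟨i, hni⟩ with hiSdef
        set y := x - c • e i with hydef
        have hy : y ∈ H := H.sub_mem hx (H.smul_mem c (heH i))
        have hyi : y i = 0 := by
          rw [hydef]
          simp only [Finsupp.sub_apply, Finsupp.smul_apply, smul_eq_mul]
          rw [he2 i, hc, smul_eq_mul, sub_self]
        have hysupp : ∀ j ∈ y.support, j < i := by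
          intro j hj
          have hyj : y j ≠ 0 := Finsupp.mem_support_iff.mp hj
          rcases lt_trichotomy j i with h | h | h
          · exact h
          · exact absurd (h ▸ hyi) hyj
          · exfalso
            apply hyj
            rw [hydef]
            simp only [Finsupp.sub_apply, Finsupp.smul_apply, smul_eq_mul]
            have hxj : x j = 0 := by
              by_contra hc'
              exact absurd (x.support.le_max' j (Finsupp.mem_support_iff.mpr hc')) (not_le.mpr h)
            rw [hxj, hsupp i j h, mul_zero, sub_zero]
        have hym : y.support.max < m := by
          rw [hmi]
          rcases y.support.eq_empty_or_nonempty with h | h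
          · rw [h, Finset.max_empty]; exact WithBot.bot_lt_coe i
          · rw [← Finset.coe_max' h]
            exact_mod_cast hysupp _ (y.support.max'_mem h)
        have hyspan := ih _ hym y hy rfl
        have hxeq : x = y + c • e i := by rw [hydef, sub_add_cancel]
        rw [hxeq]
        exact Submodule.add_mem _ hyspan (Submodule.smul_mem _ c
          (Submodule.subset_span ⟨iS, rfl⟩))
    exact fun x hx => key x.support.max x hx rfl
  -- build basis
  set v : S → ↥H := fun i => ⟨e i.1, heH i.1⟩ with hvdef
  have hvind : LinearIndependent ℤ v :=
    LinearIndependent.of_comp H.subtype (by exact hind)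
  have hvspan : ⊤ ≤ Submodule.span ℤ (Set.range v) := by
    intro x _
    have hx := hspan x.1 x.2
    have himg : (Set.range fun i : S => e i.1) = H.subtype '' Set.range v := by
      rw [← Set.range_comp]; rfl
    rw [himg, ← Submodule.map_span] at hx
    obtain ⟨y, hy, hyx⟩ := hx
    exact (show y = x from Subtype.ext hyx) ▸ hy
  exact Module.Free.of_basis (Module.Basis.mk hvind hvspan)

/-- Let `M` be a cancellative commutative monoid with unit group `Mˣ`,
whose quotient by units `M/Mˣ` (realized as `Associates M`) has free abelian group
completion (equivalently, since `M` is cancellative, `M/Mˣ` embeds in a free abelian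
group `ι →₀ ℤ`). Then the projection `M → M/Mˣ` admits a monoid section `s`, and
`(p, u) ↦ s(p)·u` is an isomorphism `(M/Mˣ) × Mˣ ≅ M`. -/
theorem stmt9 (M : Type) [CancelCommMonoid M]
    (ι : Type) (f : Associates M →* Multiplicative (ι →₀ ℤ))
    (hf : Function.Injective f) :
    ∃ s : Associates M →* M,
      (∀ p, Associates.mk (s p) = p) ∧
      Function.Bijective (fun pu : Associates M × Mˣ => s pu.1 * (pu.2 : M)) := by
  classical
  set F := Multiplicative (ι →₀ ℤ) with hF
  set g : M →* F := f.comp Associates.mkMonoidHom with hg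
  set gH : M × M →* F :=
    (g.comp (MonoidHom.fst M M)) * (g.comp (MonoidHom.snd M M))⁻¹ with hgH
  have hgHapp : ∀ p : M × M, gH p = g p.1 * (g p.2)⁻¹ := fun p => rfl
  have hker : stmt9Con M ≤ Con.ker gH := by
    intro x y h
    have h' : x.1 * y.2 = y.1 * x.2 := h
    show gH x = gH y
    rw [hgHapp, hgHapp, ← div_eq_mul_inv, ← div_eq_mul_inv, div_eq_div_iff_mul_eq_mul,
      ← map_mul, ← map_mul, h']
  set π : (stmt9Con M).Quotient →* F := (stmt9Con M).lift gH hker with hπ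
  have hπe : ∀ a : M, π (stmt9Emb M a) = g a := by
    intro a
    show π (((a, 1) : M × M) : (stmt9Con M).Quotient) = g a
    rw [hπ, Con.lift_coe, hgHapp]
    simp
  have key : ∀ (x : (stmt9Con M).Quotient) (a : M), π x = g a →
      ∃ b : M, x = stmt9Emb M b ∧ Associates.mk b = Associates.mk a := by
    intro x a hx
    induction x using Con.induction_on with
    | _ p =>
      obtain ⟨c, d⟩ := p
      have h1 : g c * (g d)⁻¹ = g a := by
        rw [← hx, hπ, Con.lift_coe, hgHapp]
      have h2 : g c = g (a * d) := by
        rw [map_mul, ← h1, inv_mul_cancel_right]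
      have h3 : Associates.mk c = Associates.mk (a * d) := hf h2
      obtain ⟨u, hu⟩ := Associates.mk_eq_mk_iff_associated.mp h3
      refine ⟨a * ↑u⁻¹, ?_, ?_⟩
      · refine ((stmt9Con M).eq).mpr ?_
        show c * 1 = (a * ↑u⁻¹) * d
        have hcval : c = a * d * ↑u⁻¹ := by
          rw [← hu, Units.mul_inv_cancel_right]
        rw [mul_one, hcval]
        ac_rfl
      · exact Associates.mk_eq_mk_iff_associated.mpr ⟨u, by rw [Units.inv_mul_cancel_right]⟩
  -- pass to additive world and split
  set πlin : Additive (stmt9Con M).Quotient →ₗ[ℤ] (ι →₀ ℤ) :=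
    (MonoidHom.toAdditiveLeft π).toIntLinearMap with hπlin
  have hπlinapp : ∀ x : (stmt9Con M).Quotient,
      πlin (Additive.ofMul x) = Multiplicative.toAdd (π x) := fun x => rfl
  set H := LinearMap.range πlin with hH
  haveI : Module.Free ℤ ↥H := stmt9_free H
  obtain ⟨ρ, hρ⟩ := LinearMap.exists_rightInverse_of_surjective πlin.rangeRestrict
    (LinearMap.range_rangeRestrict _)
  have memH : ∀ p : Associates M, Multiplicative.toAdd (f p) ∈ H := by
    intro p
    obtain ⟨a, rfl⟩ := Associates.mk_surjective p
    exact ⟨Additive.ofMul (stmt9Emb M a), congrArg Multiplicative.toAdd (hπe a)⟩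
  set T : Associates M → (stmt9Con M).Quotient :=
    fun p => Additive.toMul (ρ ⟨Multiplicative.toAdd (f p), memH p⟩) with hT
  have hπT : ∀ p, π (T p) = f p := by
    intro p
    have h1 := LinearMap.congr_fun hρ ⟨Multiplicative.toAdd (f p), memH p⟩
    have h2 : πlin (ρ ⟨Multiplicative.toAdd (f p), memH p⟩) = Multiplicative.toAdd (f p) :=
      congrArg Subtype.val h1
    exact Multiplicative.toAdd.injective h2
  have hT1 : T 1 = 1 := by
    have h0 : (⟨Multiplicative.toAdd (f 1), memH 1⟩ : ↥H) = 0 := Subtype.ext (by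
      show Multiplicative.toAdd (f 1) = 0
      rw [map_one]; rfl)
    show Additive.toMul (ρ ⟨Multiplicative.toAdd (f 1), memH 1⟩) = 1
    rw [h0, map_zero]; rfl
  have hTmul : ∀ p q, T (p * q) = T p * T q := by
    intro p q
    have h0 : (⟨Multiplicative.toAdd (f (p * q)), memH (p * q)⟩ : ↥H) =
        ⟨Multiplicative.toAdd (f p), memH p⟩ + ⟨Multiplicative.toAdd (f q), memH q⟩ :=
      Subtype.ext (by
        show Multiplicative.toAdd (f (p * q)) =
          Multiplicative.toAdd (f p) + Multiplicative.toAdd (f q)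
        rw [map_mul]; rfl)
    show Additive.toMul (ρ ⟨Multiplicative.toAdd (f (p * q)), memH (p * q)⟩) = _
    rw [h0, map_add]; rfl
  have hs : ∀ p : Associates M, ∃ b : M, stmt9Emb M b = T p ∧ Associates.mk b = p := by
    intro p
    obtain ⟨a, rfl⟩ := Associates.mk_surjective p
    obtain ⟨b, hb1, hb2⟩ := key (T (Associates.mk a)) a (hπT _)
    exact ⟨b, hb1.symm, hb2⟩
  choose sfun hs1 hs2 using hs
  have geinj := stmt9Emb_injective M
  have hsmul : ∀ p q, sfun (p * q) = sfun p * sfun q := by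
    intro p q
    apply geinj
    rw [map_mul, hs1, hs1, hs1, hTmul]
  refine ⟨⟨⟨sfun, ?_⟩, hsmul⟩, hs2, ?_, ?_⟩
  · apply geinj
    rw [hs1, hT1, map_one]
  · rintro ⟨p, u⟩ ⟨q, v⟩ h
    have h' : sfun p * (u : M) = sfun q * (v : M) := h
    have hmku : ∀ (r : Associates M) (w : Mˣ), Associates.mk (sfun r * (w : M)) = r := by
      intro r w
      rw [show Associates.mk (sfun r * (w : M)) = Associates.mk (sfun r) from
        Associates.mk_eq_mk_iff_associated.mpr ⟨w⁻¹, by rw [Units.mul_inv_cancel_right]⟩, hs2]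
    have hpq : p = q := by rw [← hmku p u, ← hmku q v, h']
    subst hpq
    have huv : (u : M) = (v : M) := by
      apply mul_left_cancel (a := sfun p)
      exact h'
    exact Prod.ext rfl (Units.ext huv)
  · intro m
    obtain ⟨u, hu⟩ := Associates.mk_eq_mk_iff_associated.mp (hs2 (Associates.mk m))
    exact ⟨(Associates.mk m, u), hu⟩
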